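/- The map Φ_b^(t) (the t-fold composition of Φ_b, where Φ_b(M) = φ_{tr M}^(b)(M)) is non-decreasing on diagonal psd matrices: if Λ₁ ⪯ Λ₂ are diagonal psd matrices (with positive traces), then Φ_b^(t)(Λ₁) ⪯ Φ_b^(t)(Λ₂). -/

import Mathlib

open ComplexOrder

/-- real scalar step -/
def rstep (c x : ℝ) : ℝ := x - c * x ^ 2

lemma rstep_bounds {α x : ℝ} (hα : 0 < α) (hx : 0 ≤ x) (hxα : x ≤ α) :
    0 ≤ rstep α⁻¹ x ∧ rstep α⁻¹ x ≤ α / 4 := by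
  have hy : α * α⁻¹ = 1 := mul_inv_cancel₀ hα.ne'
  have hy0 : 0 ≤ α⁻¹ := inv_nonneg.2 hα.le
  constructor
  · have h : rstep α⁻¹ x = α⁻¹ * (x * (α - x)) := by
      unfold rstep; linear_combination (-x) * hy
    rw [h]
    exact mul_nonneg hy0 (mul_nonneg hx (by linarith))
  · unfold rstep
    nlinarith [sq_nonneg (α - 2 * x), mul_nonneg hy0 (sq_nonneg (α - 2 * x))]

lemma rstep_first {α α' x x' : ℝ} (hα : 0 < α) (hx : 0 ≤ x) (hxα : x ≤ α)
    (hxx : x ≤ x') (hx'α : x' ≤ α') (hd : x' - x ≤ α' - α) :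
    rstep α⁻¹ x ≤ rstep α'⁻¹ x' := by
  have hα' : 0 < α' := lt_of_lt_of_le hα (by linarith)
  unfold rstep
  have e1 : α * α' * (x - α⁻¹ * x ^ 2) = α' * (α * x - x ^ 2) := by
    field_simp
  have e2 : α * α' * (x' - α'⁻¹ * x' ^ 2) = α * (α' * x' - x' ^ 2) := by
    field_simp
  have key : α * α' * (x - α⁻¹ * x ^ 2) ≤ α * α' * (x' - α'⁻¹ * x' ^ 2) := by
    rw [e1, e2]
    nlinarith [mul_nonneg (sub_nonneg.2 hxx) (sq_nonneg (α - x)),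
      mul_nonneg (mul_nonneg hα.le (sub_nonneg.2 hxx)) (by linarith : (0:ℝ) ≤ (α' - α) - (x' - x)),
      mul_nonneg (by linarith : (0:ℝ) ≤ (α' - α) - (x' - x)) (sq_nonneg x)]
  exact le_of_mul_le_mul_left key (by positivity)

lemma rstep_mono {α α' x x' : ℝ} (hα : 0 < α) (hαα : α ≤ α') (hx : 0 ≤ x)
    (hxx : x ≤ x') (hx' : x' ≤ α' / 2) :
    rstep α⁻¹ x ≤ rstep α'⁻¹ x' := by
  have hα' : 0 < α' := lt_of_lt_of_le hα hαα
  unfold rstep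
  have h1 : α⁻¹ * x ^ 2 ≥ α'⁻¹ * x ^ 2 := by
    gcongr
  have h2 : x' - α'⁻¹ * x' ^ 2 ≥ x - α'⁻¹ * x ^ 2 := by
    have hy : α' * α'⁻¹ = 1 := mul_inv_cancel₀ hα'.ne'
    have hy0 : 0 ≤ α'⁻¹ := inv_nonneg.2 hα'.le
    nlinarith [mul_nonneg hy0 (mul_nonneg (sub_nonneg.2 hxx) (by linarith : (0:ℝ) ≤ α' - (x + x')))]
  linarith

/-- vector step -/
def vstep {N : ℕ} (c : ℝ) (w : Fin N → ℝ) : Fin N → ℝ := fun i => rstep c (w i)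

/-- vector version of `PhiB` -/
noncomputable def phiV {N : ℕ} (b : ℕ) (v : Fin N → ℝ) : Fin N → ℝ :=
  (vstep (∑ j, v j)⁻¹)^[b] v

lemma vstep_zero {N : ℕ} (c : ℝ) : vstep (N := N) c 0 = 0 := by
  funext i; simp [vstep, rstep]

lemma phiV_zero {N : ℕ} (b : ℕ) : phiV (N := N) b 0 = 0 := by
  unfold phiV
  rw [Function.iterate_fixed (vstep_zero _)]

/-- nonnegativity and boundedness preserved along the inner iteration -/
lemma vstep_iter_bounds {N : ℕ} {α : ℝ} (hα : 0 < α) (k : ℕ) (w : Fin N → ℝ)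
    (h : ∀ i, 0 ≤ w i ∧ w i ≤ α) :
    ∀ i, 0 ≤ (vstep α⁻¹)^[k] w i ∧ (vstep α⁻¹)^[k] w i ≤ α := by
  induction k generalizing w with
  | zero => simpa using h
  | succ k ih =>
    rw [Function.iterate_succ_apply]
    refine ih _ fun i => ?_
    obtain ⟨h1, h2⟩ := rstep_bounds hα (h i).1 (h i).2
    refine ⟨h1, ?_⟩
    show rstep α⁻¹ (w i) ≤ α
    linarith

/-- the invariant preserved during the inner iteration (after the first step) -/
def InnerInv {N : ℕ} (α α' : ℝ) (w w' : Fin N → ℝ) : Prop :=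
  ∀ i, 0 ≤ w i ∧ w i ≤ w' i ∧ w i ≤ α / 4 ∧ w' i ≤ α' / 4

lemma innerInv_step {N : ℕ} {α α' : ℝ} (hα : 0 < α) (hαα : α ≤ α') {w w' : Fin N → ℝ}
    (h : InnerInv α α' w w') : InnerInv α α' (vstep α⁻¹ w) (vstep α'⁻¹ w') := by
  have hα' : 0 < α' := lt_of_lt_of_le hα hαα
  intro i
  obtain ⟨h0, hle, hb, hb'⟩ := h i
  obtain ⟨g0, gb⟩ := rstep_bounds hα h0 (by linarith)
  obtain ⟨g0', gb'⟩ := rstep_bounds hα' (le_trans h0 hle) (by linarith)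
  exact ⟨g0, rstep_mono hα hαα h0 hle (by linarith), gb, gb'⟩

lemma innerInv_iter {N : ℕ} {α α' : ℝ} (hα : 0 < α) (hαα : α ≤ α') (k : ℕ) {w w' : Fin N → ℝ}
    (h : InnerInv α α' w w') : InnerInv α α' ((vstep α⁻¹)^[k] w) ((vstep α'⁻¹)^[k] w') := by
  induction k generalizing w w' with
  | zero => simpa using h
  | succ k ih =>
    rw [Function.iterate_succ_apply, Function.iterate_succ_apply]
    exact ih (innerInv_step hα hαα h)

lemma sum_eq_zero_of_nonneg {N : ℕ} {v : Fin N → ℝ} (hv : ∀ i, 0 ≤ v i)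
    (h : ∑ j, v j = 0) : v = 0 := by
  funext i
  have := (Finset.sum_eq_zero_iff_of_nonneg (fun j _ => hv j)).1 h i (Finset.mem_univ i)
  simpa using this

lemma single_le_sum' {N : ℕ} {v : Fin N → ℝ} (hv : ∀ i, 0 ≤ v i) (i : Fin N) :
    v i ≤ ∑ j, v j :=
  Finset.single_le_sum (fun j _ => hv j) (Finset.mem_univ i)

lemma phiV_nonneg {N : ℕ} (b : ℕ) {v : Fin N → ℝ} (hv : ∀ i, 0 ≤ v i) :
    ∀ i, 0 ≤ phiV b v i := by
  intro i
  rcases eq_or_lt_of_le (Finset.sum_nonneg fun j (_ : j ∈ Finset.univ) => hv j) with h0 | hpos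
  · rw [sum_eq_zero_of_nonneg hv h0.symm, phiV_zero]; simp
  · exact ((vstep_iter_bounds hpos b v (fun j => ⟨hv j, single_le_sum' hv j⟩)) i).1

lemma phiV_mono {N : ℕ} (b : ℕ) (hb : 1 ≤ b) {v v' : Fin N → ℝ}
    (hv : ∀ i, 0 ≤ v i) (hle : ∀ i, v i ≤ v' i) :
    ∀ i, phiV b v i ≤ phiV b v' i := by
  have hv' : ∀ i, 0 ≤ v' i := fun i => le_trans (hv i) (hle i)
  have hαα : (∑ j, v j) ≤ ∑ j, v' j := Finset.sum_le_sum fun j _ => hle j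
  rcases eq_or_lt_of_le (Finset.sum_nonneg fun j (_ : j ∈ Finset.univ) => hv j) with h0 | hpos
  · intro i
    rw [sum_eq_zero_of_nonneg hv h0.symm, phiV_zero]
    exact phiV_nonneg b hv' i
  · intro i
    have hα' : 0 < ∑ j, v' j := lt_of_lt_of_le hpos hαα
    obtain ⟨m, rfl⟩ : ∃ m, b = m + 1 := ⟨b - 1, (Nat.succ_pred_eq_of_pos hb).symm⟩
    unfold phiV
    rw [Function.iterate_succ_apply, Function.iterate_succ_apply]
    have hinv : InnerInv (∑ j, v j) (∑ j, v' j)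
        (vstep (∑ j, v j)⁻¹ v) (vstep (∑ j, v' j)⁻¹ v') := by
      intro j
      have hjα : v j ≤ ∑ k, v k := single_le_sum' hv j
      have hjα' : v' j ≤ ∑ k, v' k := single_le_sum' hv' j
      have hdiff : v' j - v j ≤ (∑ k, v' k) - ∑ k, v k := by
        have h1 : v' j - v j ≤ ∑ k, (v' k - v k) :=
          single_le_sum' (v := fun k => v' k - v k) (fun k => by show (0:ℝ) ≤ v' k - v k; linarith [hle k]) j
        rw [Finset.sum_sub_distrib] at h1
        exact h1
      obtain ⟨g0, gb⟩ := rstep_bounds hpos (hv j) hjα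
      obtain ⟨g0', gb'⟩ := rstep_bounds hα' (hv' j) hjα'
      exact ⟨g0, rstep_first hpos (hv j) hjα (hle j) hjα' hdiff, gb, gb'⟩
    exact ((innerInv_iter hpos hαα m hinv) i).2.1

noncomputable def PhiB {N : ℕ} (b : ℕ) (M : Matrix (Fin N) (Fin N) ℂ) :
    Matrix (Fin N) (Fin N) ℂ :=
  (fun X : Matrix (Fin N) (Fin N) ℂ => X - (Matrix.trace M)⁻¹ • X ^ 2)^[b] M

lemma step_diag {N : ℕ} (c : ℝ) (w : Fin N → ℝ) :
    (Matrix.diagonal fun i => (w i : ℂ)) - ((c : ℝ) : ℂ) • (Matrix.diagonal fun i => (w i : ℂ)) ^ 2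
      = Matrix.diagonal fun i => ((vstep c w i : ℝ) : ℂ) := by
  have h2 : (Matrix.diagonal fun i => ((w i : ℝ) : ℂ)) ^ 2
      = Matrix.diagonal fun i => ((w i : ℝ) : ℂ) ^ 2 := by
    rw [pow_two, Matrix.diagonal_mul_diagonal]
    congr 1
    funext i
    ring
  rw [h2]
  ext i j
  by_cases h : i = j
  · subst h
    simp only [Matrix.sub_apply, Matrix.smul_apply, Matrix.diagonal_apply_eq, smul_eq_mul,
      vstep, rstep]
    push_cast
    ring
  · simp [Matrix.diagonal_apply_ne _ h]

lemma iter_diag {N : ℕ} (c : ℝ) (k : ℕ) (v : Fin N → ℝ) :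
    (fun X : Matrix (Fin N) (Fin N) ℂ => X - ((c : ℝ) : ℂ) • X ^ 2)^[k]
        (Matrix.diagonal fun i => (v i : ℂ))
      = Matrix.diagonal fun i => (((vstep c)^[k] v) i : ℂ) := by
  induction k with
  | zero => simp
  | succ k ih =>
    rw [Function.iterate_succ_apply', Function.iterate_succ_apply', ih, step_diag]

lemma PhiB_diag {N : ℕ} (b : ℕ) (v : Fin N → ℝ) :
    PhiB b (Matrix.diagonal fun i => (v i : ℂ))
      = Matrix.diagonal fun i => ((phiV b v) i : ℂ) := by
  unfold PhiB phiV
  have htr : Matrix.trace (Matrix.diagonal fun i => (v i : ℂ)) = ((∑ j, v j : ℝ) : ℂ) := by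
    rw [Matrix.trace_diagonal]
    push_cast
    rfl
  rw [htr, ← Complex.ofReal_inv]
  exact iter_diag _ b v

lemma PhiB_iter_diag {N : ℕ} (b t : ℕ) (v : Fin N → ℝ) :
    (PhiB b)^[t] (Matrix.diagonal fun i => (v i : ℂ))
      = Matrix.diagonal fun i => (((phiV b)^[t] v) i : ℂ) := by
  induction t with
  | zero => simp
  | succ t ih =>
    rw [Function.iterate_succ_apply', Function.iterate_succ_apply', ih, PhiB_diag]

lemma phiV_iter_props {N : ℕ} (b t : ℕ) (hb : 1 ≤ b) {v v' : Fin N → ℝ}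
    (hv : ∀ i, 0 ≤ v i) (hle : ∀ i, v i ≤ v' i) :
    (∀ i, 0 ≤ (phiV b)^[t] v i) ∧ (∀ i, (phiV b)^[t] v i ≤ (phiV b)^[t] v' i) := by
  induction t with
  | zero => exact ⟨hv, hle⟩
  | succ t ih =>
    rw [Function.iterate_succ_apply', Function.iterate_succ_apply']
    exact ⟨phiV_nonneg b ih.1, phiV_mono b hb ih.1 ih.2⟩

lemma diag_entry_nonneg {N : ℕ} {M : Matrix (Fin N) (Fin N) ℂ} (hM : M.PosSemidef)
    (i : Fin N) : 0 ≤ M i i := by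
  exact hM.diag_nonneg

lemma eq_diag_re {N : ℕ} {M : Matrix (Fin N) (Fin N) ℂ} (hd : M.IsDiag) (hM : M.PosSemidef) :
    M = Matrix.diagonal fun i => (((M i i).re : ℝ) : ℂ) := by
  ext i j
  rcases eq_or_ne i j with rfl | hij
  · have h0 : 0 ≤ M i i := diag_entry_nonneg hM i
    rw [Complex.nonneg_iff] at h0
    rw [Matrix.diagonal_apply_eq]
    apply Complex.ext
    · simp
    · simp [← h0.2]
  · rw [Matrix.diagonal_apply_ne _ hij]
    exact hd hij

theorem PhiB_iter_monotone {N : ℕ} (b t : ℕ) (hb : 1 ≤ b) (ht : 1 ≤ t)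
    (Λ₁ Λ₂ : Matrix (Fin N) (Fin N) ℂ)
    (hd₁ : Λ₁.IsDiag) (hd₂ : Λ₂.IsDiag)
    (h₁ : Λ₁.PosSemidef) (h₂ : Λ₂.PosSemidef)
    (ht₁ : 0 < (Matrix.trace Λ₁).re) (ht₂ : 0 < (Matrix.trace Λ₂).re)
    (hle : (Λ₂ - Λ₁).PosSemidef) :
    ((PhiB b)^[t] Λ₂ - (PhiB b)^[t] Λ₁).PosSemidef := by
  set v : Fin N → ℝ := fun i => (Λ₁ i i).re with hv_def
  set v' : Fin N → ℝ := fun i => (Λ₂ i i).re with hv'_def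
  have hΛ₁ : Λ₁ = Matrix.diagonal fun i => ((v i : ℝ) : ℂ) := eq_diag_re hd₁ h₁
  have hΛ₂ : Λ₂ = Matrix.diagonal fun i => ((v' i : ℝ) : ℂ) := eq_diag_re hd₂ h₂
  have hv : ∀ i, 0 ≤ v i := fun i => ((Complex.nonneg_iff).1 (diag_entry_nonneg h₁ i)).1
  have hvle : ∀ i, v i ≤ v' i := by
    intro i
    have h0 : 0 ≤ (Λ₂ - Λ₁) i i := diag_entry_nonneg hle i
    have := ((Complex.nonneg_iff).1 h0).1
    simp only [Matrix.sub_apply, Complex.sub_re] at this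
    linarith
  rw [hΛ₁, hΛ₂, PhiB_iter_diag, PhiB_iter_diag, Matrix.diagonal_sub]
  rw [Matrix.posSemidef_diagonal_iff]
  intro i
  obtain ⟨hnn, hmono⟩ := phiV_iter_props b t hb hv hvle
  rw [← Complex.ofReal_sub, Complex.zero_le_real]
  linarith [hmono i]
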